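/- Let P = (1/5)·P₁ + (4/5)·P₂ where P₁ is uniform on [0,1] and P₂ is uniform on [1,2]. Then the optimal set of two-means for P is {11/16, 25/16}, and the corresponding quantization error is V₂ = 317/3840. -/

import Mathlib

open MeasureTheory Set

noncomputable def unif (a b : ℝ) : Measure ℝ :=
  (ENNReal.ofReal (b - a))⁻¹ • (volume.restrict (Icc a b))

noncomputable def mix (p : ℝ) (P₁ P₂ : Measure ℝ) : Measure ℝ :=
  ENNReal.ofReal p • P₁ + ENNReal.ofReal (1 - p) • P₂

noncomputable def distortion (P : Measure ℝ) (γ : Finset ℝ) : ℝ :=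
  ∫ x, sInf ((fun c => (x - c) ^ 2) '' (γ : Set ℝ)) ∂P

noncomputable def quantErr (P : Measure ℝ) (n : ℕ) : ℝ :=
  sInf { v | ∃ γ : Finset ℝ, γ.Nonempty ∧ γ.card ≤ n ∧ v = distortion P γ }

def IsOptimal (P : Measure ℝ) (n : ℕ) (γ : Finset ℝ) : Prop :=
  γ.Nonempty ∧ γ.card ≤ n ∧ distortion P γ = quantErr P n

namespace Quant2

open intervalIntegral

lemma integral_sq (t u v : ℝ) : ∫ x in u..v, (x - t)^2 = ((v - t)^3 - (u - t)^3)/3 := by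
  have h : ∀ x : ℝ, HasDerivAt (fun y => (y - t)^3/3) ((x - t)^2) x := by
    intro x
    have h := (((hasDerivAt_id x).sub_const t).pow 3).div_const 3
    simpa using h
  rw [integral_eq_sub_of_hasDerivAt (fun x _ => h x)
    (by apply Continuous.intervalIntegrable; continuity)]
  ring

lemma split_min (a b u v : ℝ) (hab : a ≤ b) (huv : u ≤ v) :
    ∫ x in u..v, min ((x - a)^2) ((x - b)^2)
      = (∫ x in u..(max u (min ((a+b)/2) v)), (x - a)^2)
        + ∫ x in (max u (min ((a+b)/2) v))..v, (x - b)^2 := by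
  set m := (a+b)/2 with hm
  set w := max u (min m v) with hw
  have huw : u ≤ w := le_max_left _ _
  have hwv : w ≤ v := max_le huv (min_le_right _ _)
  have cont : Continuous fun x : ℝ => min ((x - a)^2) ((x - b)^2) := by continuity
  have e1 : ∫ x in u..w, min ((x - a)^2) ((x - b)^2) = ∫ x in u..w, (x - a)^2 := by
    rw [integral_of_le huw, integral_of_le huw]
    apply setIntegral_congr_fun measurableSet_Ioc
    intro x hx
    have hxw : x ≤ max u (min m v) := hx.2
    have hxm : x ≤ m := by
      rcases max_cases u (min m v) with ⟨h, h'⟩ | ⟨h, h'⟩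
      · rw [h] at hxw; exact absurd (lt_of_lt_of_le hx.1 hxw) (lt_irrefl u)
      · rw [h] at hxw; exact le_trans hxw (min_le_left _ _)
    have : (x - a)^2 ≤ (x - b)^2 := by nlinarith [hx.1]
    exact min_eq_left this
  have e2 : ∫ x in w..v, min ((x - a)^2) ((x - b)^2) = ∫ x in w..v, (x - b)^2 := by
    rw [integral_of_le hwv, integral_of_le hwv]
    apply setIntegral_congr_fun measurableSet_Ioc
    intro x hx
    have hmx : m ≤ x := by
      have h1 : min m v < x := lt_of_le_of_lt (le_max_right u _) hx.1
      rcases min_lt_iff.mp h1 with h | h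
      · exact h.le
      · exact absurd hx.2 (not_le.mpr h)
    have : (x - b)^2 ≤ (x - a)^2 := by nlinarith
    exact min_eq_right this
  rw [← integral_add_adjacent_intervals (a := u) (b := w) (c := v)
        (cont.intervalIntegrable _ _) (cont.intervalIntegrable _ _), e1, e2]

lemma unif_eq (a b : ℝ) (h : b - a = 1) : unif a b = volume.restrict (Icc a b) := by
  rw [unif, h]
  simp

lemma integral_mix (f : ℝ → ℝ) (hf : Continuous f) :
    ∫ x, f x ∂(mix (1/5) (unif 0 1) (unif 1 2))
      = (1/5) * (∫ x in (0:ℝ)..1, f x) + (4/5) * ∫ x in (1:ℝ)..2, f x := by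
  rw [mix, unif_eq 0 1 (by norm_num), unif_eq 1 2 (by norm_num)]
  have i1 : IntegrableOn f (Icc (0:ℝ) 1) := hf.integrableOn_Icc
  have i2 : IntegrableOn f (Icc (1:ℝ) 2) := hf.integrableOn_Icc
  rw [integral_add_measure (i1.smul_measure (by simp)) (i2.smul_measure (by simp)),
      MeasureTheory.integral_smul_measure, MeasureTheory.integral_smul_measure]
  rw [integral_of_le (by norm_num : (0:ℝ) ≤ 1), integral_of_le (by norm_num : (1:ℝ) ≤ 2),
      ← integral_Icc_eq_integral_Ioc, ← integral_Icc_eq_integral_Ioc]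
  norm_num [ENNReal.toReal_ofReal]

lemma distortion_pair (γ : Finset ℝ) (a b : ℝ) (h : (γ : Set ℝ) = {a, b}) :
    distortion (mix (1/5) (unif 0 1) (unif 1 2)) γ
      = (1/5) * (∫ x in (0:ℝ)..1, min ((x - a)^2) ((x - b)^2))
        + (4/5) * ∫ x in (1:ℝ)..2, min ((x - a)^2) ((x - b)^2) := by
  rw [distortion, h]
  simp only [Set.image_pair, csInf_pair]
  exact integral_mix _ (by continuity)

lemma distortion_eval (γ : Finset ℝ) (a b : ℝ) (hab : a ≤ b) (h : (γ : Set ℝ) = {a, b}) :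
    distortion (mix (1/5) (unif 0 1) (unif 1 2)) γ
      = (1/5) * ((((max 0 (min ((a+b)/2) 1)) - a)^3 - (0 - a)^3)/3
          + ((1 - b)^3 - ((max 0 (min ((a+b)/2) 1)) - b)^3)/3)
        + (4/5) * ((((max 1 (min ((a+b)/2) 2)) - a)^3 - (1 - a)^3)/3
          + ((2 - b)^3 - ((max 1 (min ((a+b)/2) 2)) - b)^3)/3) := by
  rw [distortion_pair γ a b h, split_min a b 0 1 hab (by norm_num),
      split_min a b 1 2 hab (by norm_num), integral_sq, integral_sq, integral_sq, integral_sq]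

lemma value_eq :
    distortion (mix (1/5) (unif 0 1) (unif 1 2)) {11/16, 25/16} = 317/3840 := by
  have h : (({11/16, 25/16} : Finset ℝ) : Set ℝ) = {11/16, 25/16} := by simp
  rw [distortion_eval _ (11/16) (25/16) (by norm_num) h]
  have e1 : max (0:ℝ) (min ((11/16 + 25/16)/2) 1) = 1 := by norm_num
  have e2 : max (1:ℝ) (min ((11/16 + 25/16)/2) 2) = 9/8 := by norm_num
  rw [e1, e2]
  norm_num

lemma lower_bound (γ : Finset ℝ) (hne : γ.Nonempty) (hcard : γ.card ≤ 2) :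
    317/3840 ≤ distortion (mix (1/5) (unif 0 1) (unif 1 2)) γ := by
  obtain ⟨a, b, hab, h⟩ : ∃ a b : ℝ, a ≤ b ∧ (γ : Set ℝ) = {a, b} := by
    have h1 : 1 ≤ γ.card := Finset.card_pos.mpr hne
    interval_cases h3 : γ.card
    · obtain ⟨a, rfl⟩ := Finset.card_eq_one.mp h3
      exact ⟨a, a, le_refl a, by simp⟩
    · obtain ⟨a, b, hab, rfl⟩ := Finset.card_eq_two.mp h3
      rcases le_total a b with h | h
      · exact ⟨a, b, h, by simp⟩
      · exact ⟨b, a, h, by simp [Set.pair_comm]⟩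
  rw [distortion_eval γ a b hab h]
  rcases le_total ((a+b)/2) 0 with h0 | h0
  · have e1 : max (0:ℝ) (min ((a+b)/2) 1) = 0 :=
      max_eq_left ((min_le_left _ _).trans h0)
    have e2 : max (1:ℝ) (min ((a+b)/2) 2) = 1 :=
      max_eq_left ((min_le_left _ _).trans (by linarith))
    rw [e1, e2]
    nlinarith [sq_nonneg (b - 13/10)]
  · rcases le_total ((a+b)/2) 1 with h1 | h1
    · have e1 : max (0:ℝ) (min ((a+b)/2) 1) = (a+b)/2 := by
        rw [min_eq_left h1]; exact max_eq_right h0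
      have e2 : max (1:ℝ) (min ((a+b)/2) 2) = 1 :=
        max_eq_left ((min_le_left _ _).trans h1)
      rw [e1, e2]
      nlinarith [sq_nonneg (b - a - 1 - (3/5)*(2-a-b) - (2-a-b)^2/10), sq_nonneg (2-a-b),
        mul_nonneg (mul_nonneg (sq_nonneg (2-a-b)) (by linarith : (0:ℝ) ≤ a+b))
          (by linarith : (0:ℝ) ≤ 7/5 + (2-a-b)/10)]
    · rcases le_total ((a+b)/2) 2 with h2 | h2
      · have e1 : max (0:ℝ) (min ((a+b)/2) 1) = 1 := by
          rw [min_eq_right h1]; norm_num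
        have e2 : max (1:ℝ) (min ((a+b)/2) 2) = (a+b)/2 := by
          rw [min_eq_left h2]; exact max_eq_right h1
        rw [e1, e2]
        nlinarith [sq_nonneg (b - a - 7/8 + (2/5)*(a+b-9/4)*(1-(a+b-9/4))),
          mul_nonneg (mul_nonneg (sq_nonneg (a+b-9/4)) (by linarith : (0:ℝ) ≤ a+b-2))
            (by linarith : (0:ℝ) ≤ 4-a-b),
          mul_nonneg (sq_nonneg (a+b-9/4)) (by linarith : (0:ℝ) ≤ a+b-2),
          sq_nonneg (a+b-9/4)]
      · have e1 : max (0:ℝ) (min ((a+b)/2) 1) = 1 := by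
          rw [min_eq_right (by linarith)]; norm_num
        have e2 : max (1:ℝ) (min ((a+b)/2) 2) = 2 := by
          rw [min_eq_right h2]; norm_num
        rw [e1, e2]
        nlinarith [sq_nonneg (a - 13/10)]

lemma quantErr_eq :
    quantErr (mix (1/5) (unif 0 1) (unif 1 2)) 2 = 317 / 3840 := by
  have hne : ({11/16, 25/16} : Finset ℝ).Nonempty := Finset.insert_nonempty _ _
  have hcard : ({11/16, 25/16} : Finset ℝ).card ≤ 2 :=
    (Finset.card_insert_le _ _).trans (by simp)
  have hmem : (317/3840 : ℝ) ∈
      { v | ∃ γ : Finset ℝ, γ.Nonempty ∧ γ.card ≤ 2 ∧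
          v = distortion (mix (1/5) (unif 0 1) (unif 1 2)) γ } :=
    ⟨{11/16, 25/16}, hne, hcard, value_eq.symm⟩
  have hlb : ∀ v ∈ { v | ∃ γ : Finset ℝ, γ.Nonempty ∧ γ.card ≤ 2 ∧
      v = distortion (mix (1/5) (unif 0 1) (unif 1 2)) γ }, (317/3840 : ℝ) ≤ v := by
    rintro v ⟨γ, h1, h2, rfl⟩
    exact lower_bound γ h1 h2
  rw [quantErr]
  exact le_antisymm (csInf_le ⟨317/3840, hlb⟩ hmem) (le_csInf ⟨_, hmem⟩ hlb)

end Quant2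

theorem stmt2 :
    IsOptimal (mix (1/5) (unif 0 1) (unif 1 2)) 2 {11/16, 25/16} ∧
    quantErr (mix (1/5) (unif 0 1) (unif 1 2)) 2 = 317 / 3840 := by
  refine ⟨⟨Finset.insert_nonempty _ _, (Finset.card_insert_le _ _).trans (by simp), ?_⟩,
    Quant2.quantErr_eq⟩
  rw [Quant2.value_eq, Quant2.quantErr_eq]
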